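/- Let N be prime, let X_{i,j} for i < j index pairs of received symbols from different stream objects with independent uniform SOPIs, where X_{i,j} = 1 iff the two symbols have the same symbol ID. If M² ≤ 2N where M is the total number of received symbols, then E[(Σ_{i<j} X_{i,j})²] ≤ M²/N. -/

import Mathlib

open Finset Function

abbrev EV {N s : ℕ} (i : Fin s) (p : ZMod N) (j : Fin s) (p' : ZMod N)
    (P : Fin s → ZMod N × ZMod N) : Prop :=
  (P i).1 + p * (P i).2 = (P j).1 + p' * (P j).2

def Gd (N s : ℕ) [NeZero N] : Finset (Fin s → ZMod N × ZMod N) :=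
  Finset.univ.filter (fun P => ∀ t, (P t).2 ≠ 0)

lemma card_mul_card_le {Ω β : Type*} [Fintype β] [DecidableEq Ω]
    (S T : Finset Ω) (F : Ω → β → Ω)
    (hmem : ∀ P ∈ S, ∀ b, F P b ∈ T)
    (hinj : ∀ P ∈ S, ∀ (b : β), ∀ P' ∈ S, ∀ (b' : β),
      F P b = F P' b' → P = P' ∧ b = b') :
    Fintype.card β * S.card ≤ T.card := by
  classical
  have h := Finset.card_le_card_of_injOn (f := fun x : Ω × β => F x.1 x.2)
      (s := S ×ˢ univ) (t := T)
      (fun x hx => by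
        rw [Finset.mem_coe, Finset.mem_product] at hx
        exact hmem _ hx.1 _)
      (fun x hx y hy hxy => by
        simp only [Finset.mem_coe, Finset.mem_product] at hx hy
        obtain ⟨h1, h2⟩ := hinj _ hx.1 _ _ hy.1 _ hxy
        exact Prod.ext h1 h2)
  simpa [Finset.card_product, mul_comm] using h

section Claims
variable {N s : ℕ} [NeZero N]

lemma mem_Gd {P : Fin s → ZMod N × ZMod N} : P ∈ Gd N s ↔ ∀ t, (P t).2 ≠ 0 := by
  simp [Gd]

lemma claimA (i j : Fin s) (hij : i ≠ j) (p p' : ZMod N)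
    (W : (Fin s → ZMod N × ZMod N) → Prop) [DecidablePred W]
    (hW : ∀ P, W P → EV i p j p' P) :
    N * ((Gd N s).filter W).card ≤ (Gd N s).card := by
  classical
  have h := card_mul_card_le (β := ZMod N) ((Gd N s).filter W) (Gd N s)
    (fun P a => Function.update P j (a, (P j).2)) ?_ ?_
  · simpa [ZMod.card] using h
  · intro P hP a
    rw [mem_filter] at hP
    rw [mem_Gd] at hP ⊢
    intro t
    show (Function.update P j (a, (P j).2) t).2 ≠ 0
    rcases eq_or_ne t j with rfl | ht
    · rw [Function.update_self]
      exact hP.1 t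
    · rw [Function.update_of_ne ht]
      exact hP.1 t
  · intro P hP a P' hP' a' h
    rw [mem_filter, mem_Gd] at hP hP'
    replace h : Function.update P j (a, (P j).2) = Function.update P' j (a', (P' j).2) := h
    have hE := hW _ hP.2
    have hE' := hW _ hP'.2
    have hPt : ∀ t, t ≠ j → P t = P' t := fun t ht => by
      have := congrFun h t
      rwa [Function.update_of_ne ht, Function.update_of_ne ht] at this
    have hj := congrFun h j
    rw [Function.update_self, Function.update_self] at hj
    have ha : a = a' := (Prod.ext_iff.mp hj).1
    have h2 : (P j).2 = (P' j).2 := (Prod.ext_iff.mp hj).2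
    have hi : P i = P' i := hPt i hij
    have hj1 : (P j).1 = (P' j).1 := by
      have e1 : (P j).1 = (P i).1 + p * (P i).2 - p' * (P j).2 := by
        simp only [EV] at hE; linear_combination -hE
      have e2 : (P' j).1 = (P' i).1 + p * (P' i).2 - p' * (P' j).2 := by
        simp only [EV] at hE'; linear_combination -hE'
      rw [e1, e2, hi, h2]
    refine ⟨funext fun t => ?_, ha⟩
    rcases eq_or_ne t j with rfl | ht
    · exact Prod.ext hj1 h2
    · exact hPt t ht

lemma card_nonzero : Fintype.card {x : ZMod N // x ≠ 0} = N - 1 := by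
  rw [Fintype.card_subtype]
  rw [Finset.filter_ne' Finset.univ 0]
  rw [Finset.card_erase_of_mem (Finset.mem_univ _)]
  rw [Finset.card_univ, ZMod.card]

lemma claimB (hN : N.Prime) (i j : Fin s) (hij : i ≠ j)
    (p p' al be : ZMod N) (hne : ¬(p = al ∧ p' = be))
    (W : (Fin s → ZMod N × ZMod N) → Prop) [DecidablePred W]
    (hW : ∀ P, W P → EV i p j p' P ∧ EV i al j be P) :
    N * (N - 1) * ((Gd N s).filter W).card ≤ (Gd N s).card := by
  classical
  haveI := Fact.mk hN
  rcases eq_or_ne p' be with rfl | hb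
  · -- event impossible
    have hpa : p ≠ al := fun h => hne ⟨h, rfl⟩
    have : (Gd N s).filter W = ∅ := by
      rw [Finset.filter_eq_empty_iff]
      intro P hP
      rw [mem_Gd] at hP
      intro hw
      obtain ⟨hE1, hE2⟩ := hW P hw
      simp only [EV] at hE1 hE2
      have hz : (p - al) * (P i).2 = 0 := by linear_combination hE1 - hE2
      rcases mul_eq_zero.mp hz with h | h
      · exact hpa (sub_eq_zero.mp h)
      · exact hP i h
    rw [this]
    simp
  · have hbne : p' - be ≠ 0 := sub_ne_zero.mpr hb
    set c : ZMod N := (p' - be)⁻¹ * (p - al) with hc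
    have hdet : ∀ P, P ∈ (Gd N s).filter W →
        P j = ((P i).1 + p * (P i).2 - p' * (c * (P i).2), c * (P i).2) := by
      intro P hP
      rw [Finset.mem_filter, mem_Gd] at hP
      obtain ⟨hE1, hE2⟩ := hW P hP.2
      simp only [EV] at hE1 hE2
      have hsub : (p - al) * (P i).2 = (p' - be) * (P j).2 := by
        linear_combination hE1 - hE2
      have h2 : (P j).2 = c * (P i).2 := by
        rw [hc, mul_assoc, hsub, inv_mul_cancel_left₀ hbne]
      have h1 : (P j).1 = (P i).1 + p * (P i).2 - p' * (c * (P i).2) := by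
        rw [← h2]; linear_combination -hE1
      exact Prod.ext h1 h2
    have h := card_mul_card_le (β := ZMod N × {x : ZMod N // x ≠ 0})
      ((Gd N s).filter W) (Gd N s)
      (fun P b => Function.update P j (b.1, b.2.1)) ?_ ?_
    · rwa [Fintype.card_prod, ZMod.card, card_nonzero] at h
    · intro P hP b
      rw [Finset.mem_filter, mem_Gd] at hP
      rw [mem_Gd]
      intro t
      show (Function.update P j (b.1, b.2.1) t).2 ≠ 0
      rcases eq_or_ne t j with rfl | ht
      · rw [Function.update_self]; exact b.2.2
      · rw [Function.update_of_ne ht]; exact hP.1 t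
    · intro P hP b P' hP' b' h
      replace h : Function.update P j (b.1, b.2.1) = Function.update P' j (b'.1, b'.2.1) := h
      have hPt : ∀ t, t ≠ j → P t = P' t := fun t ht => by
        have := congrFun h t
        rwa [Function.update_of_ne ht, Function.update_of_ne ht] at this
      have hPj : P j = P' j := by
        rw [hdet P hP, hdet P' hP', hPt i hij]
      have hPP : P = P' := funext fun t => by
        rcases eq_or_ne t j with rfl | ht
        · exact hPj
        · exact hPt t ht
      refine ⟨hPP, ?_⟩
      have hj := congrFun h j
      rw [Function.update_self, Function.update_self] at hj
      obtain ⟨e1, e2⟩ := Prod.ext_iff.mp hj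
      exact Prod.ext e1 (Subtype.ext e2)



lemma exists_c {α : Type*} (i j i' j' : α) (hij : i ≠ j)
    (hdiff : ¬((i = i' ∧ j = j') ∨ (i = j' ∧ j = i'))) :
    ∃ c, (c = i ∨ c = j) ∧ c ≠ i' ∧ c ≠ j' := by
  by_cases hii' : i = i'
  · subst hii'
    exact ⟨j, Or.inr rfl, fun h => hij h.symm, fun h => hdiff (Or.inl ⟨rfl, h⟩)⟩
  · by_cases hij2 : i = j'
    · subst hij2
      exact ⟨j, Or.inr rfl, fun h => hdiff (Or.inr ⟨rfl, h⟩), fun h => hij h.symm⟩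
    · exact ⟨i, Or.inl rfl, hii', hij2⟩

lemma claimC (i j i' j' : Fin s) (hij : i ≠ j) (hij' : i' ≠ j')
    (hdiff : ¬((i = i' ∧ j = j') ∨ (i = j' ∧ j = i')))
    (p p' r r' : ZMod N)
    (W : (Fin s → ZMod N × ZMod N) → Prop) [DecidablePred W]
    (hW : ∀ P, W P → EV i p j p' P ∧ EV i' r j' r' P) :
    N * N * ((Gd N s).filter W).card ≤ (Gd N s).card := by
  classical
  obtain ⟨c1, hc1m, hc1i', hc1j'⟩ := exists_c i j i' j' hij hdiff
  obtain ⟨c2, hc2m, hc2i, hc2j⟩ := exists_c i' j' i j hij'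
    (fun h => hdiff (h.elim (fun ⟨a, b⟩ => Or.inl ⟨a.symm, b.symm⟩)
      (fun ⟨a, b⟩ => Or.inr ⟨b.symm, a.symm⟩)))
  have hc12 : c1 ≠ c2 := by
    rcases hc1m with rfl | rfl
    · exact fun h => hc2i h.symm
    · exact fun h => hc2j h.symm
  have h := card_mul_card_le (β := ZMod N × ZMod N)
    ((Gd N s).filter W) (Gd N s)
    (fun P b => Function.update (Function.update P c1 (b.1, (P c1).2)) c2 (b.2, (P c2).2)) ?_ ?_
  · rwa [Fintype.card_prod, ZMod.card] at h
  · intro P hP b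
    rw [Finset.mem_filter, mem_Gd] at hP
    rw [mem_Gd]
    intro t
    show (Function.update (Function.update P c1 (b.1, (P c1).2)) c2 (b.2, (P c2).2) t).2 ≠ 0
    rcases eq_or_ne t c2 with rfl | ht2
    · rw [Function.update_self]; exact hP.1 t
    · rw [Function.update_of_ne ht2]
      rcases eq_or_ne t c1 with rfl | ht1
      · rw [Function.update_self]; exact hP.1 t
      · rw [Function.update_of_ne ht1]; exact hP.1 t
  · intro P hP b P' hP' b' h
    replace h : Function.update (Function.update P c1 (b.1, (P c1).2)) c2 (b.2, (P c2).2)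
        = Function.update (Function.update P' c1 (b'.1, (P' c1).2)) c2 (b'.2, (P' c2).2) := h
    rw [Finset.mem_filter, mem_Gd] at hP hP'
    obtain ⟨hE1, hE2⟩ := hW P hP.2
    obtain ⟨hE1', hE2'⟩ := hW P' hP'.2
    simp only [EV] at hE1 hE2 hE1' hE2'
    -- values away from c1 c2 agree
    have hPt : ∀ t, t ≠ c1 → t ≠ c2 → P t = P' t := fun t ht1 ht2 => by
      have := congrFun h t
      rwa [Function.update_of_ne ht2, Function.update_of_ne ht2,
        Function.update_of_ne ht1, Function.update_of_ne ht1] at this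
    -- second components agree everywhere
    have hsnd : ∀ t, (P t).2 = (P' t).2 := by
      intro t
      rcases eq_or_ne t c2 with rfl | ht2
      · have := congrFun h t
        rw [Function.update_self, Function.update_self] at this
        exact (Prod.ext_iff.mp this).2
      · rcases eq_or_ne t c1 with rfl | ht1
        · have := congrFun h t
          rw [Function.update_of_ne ht2, Function.update_of_ne ht2,
            Function.update_self, Function.update_self] at this
          exact (Prod.ext_iff.mp this).2
        · rw [hPt t ht1 ht2]
    -- first component at c1 agrees
    have hc1fst : (P c1).1 = (P' c1).1 := by
      rcases hc1m with rfl | rfl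
      · -- c1 = i ; use hE1 : A i = A j + p' B j - p B i
        have hj12 : P j = P' j := hPt j (fun hh => hij hh.symm) hc2j.symm -- j ≠ c1 = i, j ≠ c2
        have e1 : (P c1).1 = (P j).1 + p' * (P j).2 - p * (P c1).2 := by
          linear_combination hE1
        have e2 : (P' c1).1 = (P' j).1 + p' * (P' j).2 - p * (P' c1).2 := by
          linear_combination hE1'
        rw [e1, e2, hj12, hsnd c1]
      · -- c1 = j
        have hi12 : P i = P' i := hPt i hij hc2i.symm
        have e1 : (P c1).1 = (P i).1 + p * (P i).2 - p' * (P c1).2 := by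
          linear_combination -hE1
        have e2 : (P' c1).1 = (P' i).1 + p * (P' i).2 - p' * (P' c1).2 := by
          linear_combination -hE1'
        rw [e1, e2, hi12, hsnd c1]
    have hc2fst : (P c2).1 = (P' c2).1 := by
      rcases hc2m with rfl | rfl
      · have hj12 : P j' = P' j' := by
          refine hPt j' ?_ (fun hh => hij' hh.symm)
          intro hh
          exact hc1j' hh.symm
        have e1 : (P c2).1 = (P j').1 + r' * (P j').2 - r * (P c2).2 := by
          linear_combination hE2
        have e2 : (P' c2).1 = (P' j').1 + r' * (P' j').2 - r * (P' c2).2 := by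
          linear_combination hE2'
        rw [e1, e2, hj12, hsnd c2]
      · have hi12 : P i' = P' i' := by
          refine hPt i' ?_ hij'
          intro hh
          exact hc1i' hh.symm
        have e1 : (P c2).1 = (P i').1 + r * (P i').2 - r' * (P c2).2 := by
          linear_combination -hE2
        have e2 : (P' c2).1 = (P' i').1 + r * (P' i').2 - r' * (P' c2).2 := by
          linear_combination -hE2'
        rw [e1, e2, hi12, hsnd c2]
    have hPP : P = P' := funext fun t => by
      rcases eq_or_ne t c1 with rfl | ht1
      · exact Prod.ext hc1fst (hsnd t)
      · rcases eq_or_ne t c2 with rfl | ht2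
        · exact Prod.ext hc2fst (hsnd t)
        · exact hPt t ht1 ht2
    refine ⟨hPP, ?_⟩
    have hb2 : b.2 = b'.2 := by
      have := congrFun h c2
      rw [Function.update_self, Function.update_self] at this
      exact (Prod.ext_iff.mp this).1
    have hb1 : b.1 = b'.1 := by
      have := congrFun h c1
      rw [Function.update_of_ne hc12, Function.update_of_ne hc12,
        Function.update_self, Function.update_self] at this
      exact (Prod.ext_iff.mp this).1
    exact Prod.ext hb1 hb2

lemma two_mul_card_le {M : ℕ} (Q : Finset (Fin M × Fin M)) (hQ : ∀ q ∈ Q, q.1 < q.2) :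
    2 * Q.card ≤ M * M := by
  classical
  have h := card_mul_card_le (β := Bool) Q Finset.univ
    (fun q b => if b then q else q.swap) (fun P _ b => Finset.mem_univ _) ?_
  · simpa using h
  · intro q hq b q' hq' b' h
    have h1 := hQ q hq
    have h2 := hQ q' hq'
    rcases b <;> rcases b' <;> simp only [if_true, if_false, Bool.false_eq_true, ↓reduceIte] at h
    · exact ⟨Prod.ext (congrArg Prod.snd h) (congrArg Prod.fst h), rfl⟩
    · exfalso
      rw [← h] at h2
      exact absurd (h1.trans h2) (lt_irrefl _)
    · exfalso
      rw [h] at h1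
      exact absurd (h2.trans h1) (lt_irrefl _)
    · exact ⟨h, rfl⟩

lemma card_samep_le {M sc : ℕ} (g : Fin M → Fin sc) (i j : Fin sc) (hij : i ≠ j)
    (Q : Finset (Fin M × Fin M)) (hQ : ∀ q ∈ Q, q.1 < q.2) :
    (Q.filter (fun q' => (i = g q'.1 ∧ j = g q'.2) ∨ (i = g q'.2 ∧ j = g q'.1))).card ≤
      (Finset.univ.filter (fun k => g k = i)).card *
        (Finset.univ.filter (fun k => g k = j)).card := by
  classical
  rw [← Finset.card_product]
  apply Finset.card_le_card_of_injOn (fun q' => if g q'.1 = i then q' else q'.swap)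
  · intro q' hq'
    rw [Finset.mem_coe, Finset.mem_filter] at hq'
    rcases hq'.2 with ⟨h1, h2⟩ | ⟨h1, h2⟩
    · simp only [if_pos h1.symm]
      rw [Finset.mem_coe, Finset.mem_product]
      exact ⟨Finset.mem_filter.mpr ⟨Finset.mem_univ _, h1.symm⟩,
        Finset.mem_filter.mpr ⟨Finset.mem_univ _, h2.symm⟩⟩
    · simp only [if_neg (fun hh : g q'.1 = i => hij (h2.trans hh).symm)]
      rw [Finset.mem_coe, Finset.mem_product]
      exact ⟨Finset.mem_filter.mpr ⟨Finset.mem_univ _, h1.symm⟩,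
        Finset.mem_filter.mpr ⟨Finset.mem_univ _, h2.symm⟩⟩
  · intro a ha b hb hab
    simp only [Finset.mem_coe, Finset.mem_filter] at ha hb
    have h1 := hQ a ha.1
    have h2 := hQ b hb.1
    by_cases ca : g a.1 = i <;> by_cases cb : g b.1 = i <;>
      simp only [ca, cb, if_true, if_false, if_pos, if_neg] at hab
    · exact hab
    · exfalso
      rw [hab] at h1
      exact absurd (h2.trans h1) (lt_irrefl _)
    · exfalso
      rw [← hab] at h2
      exact absurd (h1.trans h2) (lt_irrefl _)
    · exact Prod.ext (congrArg Prod.snd hab) (congrArg Prod.fst hab)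

abbrev EVq {N s M : ℕ} (f : Fin M → Fin s × ZMod N) (q : Fin M × Fin M)
    (P : Fin s → ZMod N × ZMod N) : Prop :=
  EV (f q.1).1 (f q.1).2 (f q.2).1 (f q.2).2 P

abbrev samep {N s M : ℕ} (f : Fin M → Fin s × ZMod N) (q q' : Fin M × Fin M) : Prop :=
  ((f q.1).1 = (f q'.1).1 ∧ (f q.2).1 = (f q'.2).1) ∨
    ((f q.1).1 = (f q'.2).1 ∧ (f q.2).1 = (f q'.1).1)

end Claims

set_option maxHeartbeats 1000000 in
/-- `N` prime; received symbol `k : Fin M` comes from stream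
`(f k).1` at position `(f k).2` (distinct (stream, position) pairs), with
symbol ID `A + p·B` for its stream's independent uniform SOPI `(A,B)`.
For a SOPI assignment `P`, the sum `Σ_{k<l} X_{k,l}` of collision indicators
over pairs of received symbols from different streams is the number of pairs
`(k,l)`, `k < l`, from different streams with equal symbol IDs.  If `M² ≤ 2N`
then `E[(Σ_{k<l} X_{k,l})²] ≤ M²/N`. -/
theorem sopi_second_moment_bound (N s M : ℕ) (hN : N.Prime) [NeZero N]
    (hM2 : (M : ℝ) ^ 2 ≤ 2 * N)
    (f : Fin M → Fin s × ZMod N) (hf : Function.Injective f) :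
    (∑ P ∈ (Finset.univ.filter (fun P : Fin s → ZMod N × ZMod N => ∀ t, (P t).2 ≠ 0)),
        ((Finset.univ.filter (fun q : Fin M × Fin M =>
            q.1 < q.2 ∧ (f q.1).1 ≠ (f q.2).1 ∧
            (P (f q.1).1).1 + (f q.1).2 * (P (f q.1).1).2 =
              (P (f q.2).1).1 + (f q.2).2 * (P (f q.2).1).2)).card : ℝ) ^ 2) /
      ((Finset.univ.filter (fun P : Fin s → ZMod N × ZMod N => ∀ t, (P t).2 ≠ 0)).card : ℝ)
      ≤ (M : ℝ) ^ 2 / N := by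
  classical
  haveI := Fact.mk hN
  have hGdef : (Finset.univ.filter (fun P : Fin s → ZMod N × ZMod N => ∀ t, (P t).2 ≠ 0))
      = Gd N s := rfl
  rw [hGdef]
  set x : ℝ := (N : ℝ) with hxdef
  have hx0 : (0 : ℝ) < x := by
    simp only [hxdef]
    exact_mod_cast hN.pos
  have hx1 : (1 : ℝ) < x := by
    simp only [hxdef]
    exact_mod_cast hN.one_lt
  set g : ℝ := ((Gd N s).card : ℝ) with hgdef
  have hg0 : (0 : ℝ) < g := by
    simp only [hgdef]
    have : (Gd N s).Nonempty := ⟨fun _ => (0, 1), mem_Gd.mpr fun t => one_ne_zero⟩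
    exact_mod_cast Finset.card_pos.mpr this
  set Q : Finset (Fin M × Fin M) :=
    Finset.univ.filter (fun q : Fin M × Fin M => q.1 < q.2 ∧ (f q.1).1 ≠ (f q.2).1) with hQdef
  -- rewrite the inner cardinality
  have hinner : ∀ P : Fin s → ZMod N × ZMod N,
      (Finset.univ.filter (fun q : Fin M × Fin M =>
            q.1 < q.2 ∧ (f q.1).1 ≠ (f q.2).1 ∧
            (P (f q.1).1).1 + (f q.1).2 * (P (f q.1).1).2 =
              (P (f q.2).1).1 + (f q.2).2 * (P (f q.2).1).2))
        = Q.filter (fun q => EVq f q P) := by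
    intro P
    rw [hQdef, Finset.filter_filter]
    apply Finset.filter_congr
    intro q _
    simp only [EVq, EV, and_assoc]
  have hnum : (∑ P ∈ Gd N s,
        ((Finset.univ.filter (fun q : Fin M × Fin M =>
            q.1 < q.2 ∧ (f q.1).1 ≠ (f q.2).1 ∧
            (P (f q.1).1).1 + (f q.1).2 * (P (f q.1).1).2 =
              (P (f q.2).1).1 + (f q.2).2 * (P (f q.2).1).2)).card : ℝ) ^ 2)
      = ∑ q ∈ Q, ∑ q' ∈ Q,
          (((Gd N s).filter (fun P => EVq f q P ∧ EVq f q' P)).card : ℝ) := by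
    have h1 : ∀ P : Fin s → ZMod N × ZMod N,
        ((Finset.univ.filter (fun q : Fin M × Fin M =>
            q.1 < q.2 ∧ (f q.1).1 ≠ (f q.2).1 ∧
            (P (f q.1).1).1 + (f q.1).2 * (P (f q.1).1).2 =
              (P (f q.2).1).1 + (f q.2).2 * (P (f q.2).1).2)).card : ℝ)
          = ∑ q ∈ Q, ite (EVq f q P) (1 : ℝ) 0 := by
      intro P
      rw [hinner P, Finset.card_filter]
      push_cast
      rfl
    calc (∑ P ∈ Gd N s, ((Finset.univ.filter (fun q : Fin M × Fin M =>
            q.1 < q.2 ∧ (f q.1).1 ≠ (f q.2).1 ∧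
            (P (f q.1).1).1 + (f q.1).2 * (P (f q.1).1).2 =
              (P (f q.2).1).1 + (f q.2).2 * (P (f q.2).1).2)).card : ℝ) ^ 2)
        = ∑ P ∈ Gd N s, ∑ q ∈ Q, ∑ q' ∈ Q,
            (ite (EVq f q P) (1 : ℝ) 0) * (ite (EVq f q' P) (1 : ℝ) 0) := by
          apply Finset.sum_congr rfl
          intro P _
          rw [h1 P, sq, Finset.sum_mul_sum]
      _ = ∑ q ∈ Q, ∑ q' ∈ Q, ∑ P ∈ Gd N s,
            (ite (EVq f q P) (1 : ℝ) 0) * (ite (EVq f q' P) (1 : ℝ) 0) := by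
          rw [Finset.sum_comm]
          apply Finset.sum_congr rfl
          intro q _
          rw [Finset.sum_comm]
      _ = ∑ q ∈ Q, ∑ q' ∈ Q,
            (((Gd N s).filter (fun P => EVq f q P ∧ EVq f q' P)).card : ℝ) := by
          apply Finset.sum_congr rfl; intro q _
          apply Finset.sum_congr rfl; intro q' _
          rw [← Finset.sum_boole]
          apply Finset.sum_congr rfl; intro P _
          by_cases hA : EVq f q P <;> by_cases hB : EVq f q' P
          · rw [if_pos hA, if_pos hB, if_pos (⟨hA, hB⟩ : EVq f q P ∧ EVq f q' P), one_mul]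
          · rw [if_pos hA, if_neg hB, if_neg (fun hh : EVq f q P ∧ EVq f q' P => hB hh.2), mul_zero]
          · rw [if_neg hA, if_pos hB, if_neg (fun hh : EVq f q P ∧ EVq f q' P => hA hh.1), zero_mul]
          · rw [if_neg hA, if_neg hB, if_neg (fun hh : EVq f q P ∧ EVq f q' P => hA hh.1), mul_zero]
  rw [hnum]
  -- membership facts
  have hQmem : ∀ q ∈ Q, q.1 < q.2 ∧ (f q.1).1 ≠ (f q.2).1 := fun q hq =>
    (Finset.mem_filter.mp hq).2
  have hxne : x ≠ 0 := ne_of_gt hx0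
  have hx1ne : x - 1 ≠ 0 := ne_of_gt (by linarith)
  have hxx0 : (0:ℝ) < x * (x - 1) := by nlinarith
  -- bound A (diagonal)
  have hAbound : ∀ q ∈ Q,
      (((Gd N s).filter (fun P => EVq f q P ∧ EVq f q P)).card : ℝ) ≤ g / x := by
    intro q hq
    obtain ⟨hlt, hstr⟩ := hQmem q hq
    rw [le_div_iff₀ hx0]
    have hcl := claimA (f q.1).1 (f q.2).1 hstr (f q.1).2 (f q.2).2
      (fun P => EVq f q P ∧ EVq f q P) (fun P hP => hP.1)
    have hcast : ((N * ((Gd N s).filter (fun P => EVq f q P ∧ EVq f q P)).card : ℕ) : ℝ)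
        ≤ g := by rw [hgdef]; exact_mod_cast hcl
    push_cast at hcast
    linarith
  -- bound B (same stream pair, distinct)
  have hBbound : ∀ q ∈ Q, ∀ q' ∈ Q, q' ≠ q → samep f q q' →
      (((Gd N s).filter (fun P => EVq f q P ∧ EVq f q' P)).card : ℝ) ≤ g / (x * (x - 1)) := by
    intro q hq q' hq' hne hsp
    obtain ⟨hlt, hstr⟩ := hQmem q hq
    obtain ⟨hlt', hstr'⟩ := hQmem q' hq'
    rw [le_div_iff₀ hxx0]
    have hxcast : ((N * (N - 1) : ℕ) : ℝ) = x * (x - 1) := by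
      push_cast [Nat.cast_sub hN.one_le]
      ring
    rcases hsp with ⟨h1, h2⟩ | ⟨h1, h2⟩
    · have hpos : ¬((f q.1).2 = (f q'.1).2 ∧ (f q.2).2 = (f q'.2).2) := by
        rintro ⟨e1, e2⟩
        apply hne
        have c1 : q'.1 = q.1 := hf (Prod.ext h1.symm e1.symm)
        have c2 : q'.2 = q.2 := hf (Prod.ext h2.symm e2.symm)
        exact Prod.ext c1 c2
      have hcl := claimB hN (f q.1).1 (f q.2).1 hstr (f q.1).2 (f q.2).2
        (f q'.1).2 (f q'.2).2 hpos (fun P => EVq f q P ∧ EVq f q' P)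
        (fun P hP => ⟨hP.1, by
          have hthis := hP.2
          simp only [EVq, EV] at hthis ⊢
          rw [← h1, ← h2] at hthis
          exact hthis⟩)
      have hcast : ((N * (N - 1) * ((Gd N s).filter
          (fun P => EVq f q P ∧ EVq f q' P)).card : ℕ) : ℝ) ≤ g := by rw [hgdef]; exact_mod_cast hcl
      rw [Nat.cast_mul, hxcast] at hcast
      linarith
    · have hpos : ¬((f q.1).2 = (f q'.2).2 ∧ (f q.2).2 = (f q'.1).2) := by
        rintro ⟨e1, e2⟩
        have c1 : q.1 = q'.2 := hf (Prod.ext h1 e1)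
        have c2 : q.2 = q'.1 := hf (Prod.ext h2 e2)
        rw [← c2] at hlt'
        have h5 : q.1 < q'.2 := hlt.trans hlt'
        rw [← c1] at h5
        exact lt_irrefl _ h5
      have hcl := claimB hN (f q.1).1 (f q.2).1 hstr (f q.1).2 (f q.2).2
        (f q'.2).2 (f q'.1).2 hpos (fun P => EVq f q P ∧ EVq f q' P)
        (fun P hP => ⟨hP.1, by
          have hthis := hP.2
          simp only [EVq, EV] at hthis ⊢
          rw [← h1, ← h2] at hthis
          exact hthis.symm⟩)
      have hcast : ((N * (N - 1) * ((Gd N s).filter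
          (fun P => EVq f q P ∧ EVq f q' P)).card : ℕ) : ℝ) ≤ g := by rw [hgdef]; exact_mod_cast hcl
      rw [Nat.cast_mul, hxcast] at hcast
      linarith
  -- bound C (different stream pairs)
  have hCbound : ∀ q ∈ Q, ∀ q' ∈ Q, ¬ samep f q q' →
      (((Gd N s).filter (fun P => EVq f q P ∧ EVq f q' P)).card : ℝ) ≤ g / x ^ 2 := by
    intro q hq q' hq' hnsp
    obtain ⟨hlt, hstr⟩ := hQmem q hq
    obtain ⟨hlt', hstr'⟩ := hQmem q' hq'
    rw [le_div_iff₀ (by positivity)]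
    have hcl := claimC (f q.1).1 (f q.2).1 (f q'.1).1 (f q'.2).1 hstr hstr' hnsp
      (f q.1).2 (f q.2).2 (f q'.1).2 (f q'.2).2
      (fun P => EVq f q P ∧ EVq f q' P) (fun P hP => hP)
    have hcast : ((N * N * ((Gd N s).filter
        (fun P => EVq f q P ∧ EVq f q' P)).card : ℕ) : ℝ) ≤ g := by rw [hgdef]; exact_mod_cast hcl
    push_cast at hcast
    nlinarith [hcast]
  -- global cardinality of Q
  have h2T : 2 * Q.card ≤ M * M :=
    two_mul_card_le Q (fun q hq => (hQmem q hq).1)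
  have h2Tr : 2 * (Q.card : ℝ) ≤ (M : ℝ) ^ 2 := by
    have : ((2 * Q.card : ℕ) : ℝ) ≤ ((M * M : ℕ) : ℝ) := by exact_mod_cast h2T
    push_cast at this
    nlinarith [this]
  have hQN : (Q.card : ℝ) ≤ x := by linarith
  -- per-q bound
  have hper : ∀ q ∈ Q,
      (∑ q' ∈ Q, (((Gd N s).filter (fun P => EVq f q P ∧ EVq f q' P)).card : ℝ))
        ≤ 2 * (g / x) := by
    intro q hq
    obtain ⟨hlt, hstr⟩ := hQmem q hq
    set Sq := Q.filter (fun q' => samep f q q') with hSqdef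
    have hqSq : q ∈ Sq := Finset.mem_filter.mpr ⟨hq, Or.inl ⟨rfl, rfl⟩⟩
    have hsplit : (∑ q' ∈ Q, (((Gd N s).filter (fun P => EVq f q P ∧ EVq f q' P)).card : ℝ))
        = (∑ q' ∈ Sq, (((Gd N s).filter (fun P => EVq f q P ∧ EVq f q' P)).card : ℝ))
          + (∑ q' ∈ Q.filter (fun q' => ¬ samep f q q'),
              (((Gd N s).filter (fun P => EVq f q P ∧ EVq f q' P)).card : ℝ)) :=
      (Finset.sum_filter_add_sum_filter_not Q _ _).symm
    have hSsplit : (∑ q' ∈ Sq, (((Gd N s).filter (fun P => EVq f q P ∧ EVq f q' P)).card : ℝ))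
        = (((Gd N s).filter (fun P => EVq f q P ∧ EVq f q P)).card : ℝ)
          + (∑ q' ∈ Sq.erase q, (((Gd N s).filter (fun P => EVq f q P ∧ EVq f q' P)).card : ℝ)) :=
      (Finset.add_sum_erase Sq _ hqSq).symm
    have b1 := hAbound q hq
    have b2 : (∑ q' ∈ Sq.erase q, (((Gd N s).filter (fun P => EVq f q P ∧ EVq f q' P)).card : ℝ))
        ≤ (Sq.erase q).card • (g / (x * (x - 1))) := by
      apply Finset.sum_le_card_nsmul
      intro q' hq'
      rw [Finset.mem_erase] at hq'
      have hq'mem := Finset.mem_filter.mp hq'.2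
      exact hBbound q hq q' hq'mem.1 hq'.1 hq'mem.2
    have b3 : (∑ q' ∈ Q.filter (fun q' => ¬ samep f q q'),
          (((Gd N s).filter (fun P => EVq f q P ∧ EVq f q' P)).card : ℝ))
        ≤ (Q.filter (fun q' => ¬ samep f q q')).card • (g / x ^ 2) := by
      apply Finset.sum_le_card_nsmul
      intro q' hq'
      have hq'mem := Finset.mem_filter.mp hq'
      exact hCbound q hq q' hq'mem.1 hq'mem.2
    -- cardinalities
    have hcard1 : (Sq.erase q).card = Sq.card - 1 := Finset.card_erase_of_mem hqSq
    have hile : 1 ≤ Sq.card := Finset.card_pos.mpr ⟨q, hqSq⟩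
    have hcard2 : Sq.card + (Q.filter (fun q' => ¬ samep f q q')).card = Q.card :=
      Finset.card_filter_add_card_filter_not (fun q' => samep f q q')
    have hdT : Sq.card ≤ Q.card := Finset.card_le_card (Finset.filter_subset _ _)
    -- Sq.card ≤ x
    have hmi := card_samep_le (fun k => (f k).1) (f q.1).1 (f q.2).1 hstr Q
      (fun q hq => (hQmem q hq).1)
    have hSx : (Sq.card : ℝ) ≤ x := by
      set mi := (Finset.univ.filter (fun k : Fin M => (f k).1 = (f q.1).1)).card with hmidef
      set mj := (Finset.univ.filter (fun k : Fin M => (f k).1 = (f q.2).1)).card with hmjdef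
      have h4n : Sq.card ≤ mi * mj := hmi
      have h4 : (Sq.card : ℝ) ≤ (mi : ℝ) * (mj : ℝ) := by exact_mod_cast h4n
      have hdisj : Disjoint (Finset.univ.filter (fun k : Fin M => (f k).1 = (f q.1).1))
          (Finset.univ.filter (fun k : Fin M => (f k).1 = (f q.2).1)) := by
        rw [Finset.disjoint_left]
        intro k hk1 hk2
        rw [Finset.mem_filter] at hk1 hk2
        exact hstr (hk1.2.symm.trans hk2.2)
      have hsum_le : mi + mj ≤ M := by
        rw [hmidef, hmjdef, ← Finset.card_union_of_disjoint hdisj]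
        calc (Finset.univ.filter (fun k : Fin M => (f k).1 = (f q.1).1) ∪
              Finset.univ.filter (fun k : Fin M => (f k).1 = (f q.2).1)).card
            ≤ (Finset.univ : Finset (Fin M)).card := Finset.card_le_univ _
          _ = M := by simp
      have hsum_ler : (mi : ℝ) + (mj : ℝ) ≤ (M : ℝ) := by exact_mod_cast hsum_le
      have hminn : (0:ℝ) ≤ (mi : ℝ) := Nat.cast_nonneg _
      have hmjnn : (0:ℝ) ≤ (mj : ℝ) := Nat.cast_nonneg _
      have h5 : ((mi : ℝ) + (mj : ℝ)) ^ 2 ≤ (M : ℝ) ^ 2 :=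
        pow_le_pow_left₀ (by positivity) hsum_ler 2
      have h6 : (mi : ℝ) * (mj : ℝ) ≤ x := by nlinarith [sq_nonneg ((mi:ℝ) - (mj:ℝ))]
      linarith
    -- real versions
    have he1 : ((Sq.erase q).card : ℝ) = (Sq.card : ℝ) - 1 := by
      rw [hcard1]
      push_cast [Nat.cast_sub hile]
      ring
    have he2 : ((Q.filter (fun q' => ¬ samep f q q')).card : ℝ) = (Q.card : ℝ) - (Sq.card : ℝ) := by
      have : ((Sq.card : ℝ) + ((Q.filter (fun q' => ¬ samep f q q')).card : ℝ)
          : ℝ) = (Q.card : ℝ) := by exact_mod_cast hcard2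
      push_cast at this
      linarith
    have hiler : (1:ℝ) ≤ (Sq.card : ℝ) := by exact_mod_cast hile
    have hdTr : (Sq.card : ℝ) ≤ (Q.card : ℝ) := by exact_mod_cast hdT
    -- the key inequality
    have key : ((Sq.card : ℝ) - 1) * x + ((Q.card : ℝ) - (Sq.card : ℝ)) * (x - 1)
        ≤ x * (x - 1) := by
      nlinarith [mul_le_mul_of_nonneg_right hQN hx0.le]
    have habs : ((Sq.card : ℝ) - 1) * (g / (x * (x - 1)))
        + ((Q.card : ℝ) - (Sq.card : ℝ)) * (g / x ^ 2) ≤ g / x := by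
      have hid : ((Sq.card : ℝ) - 1) * (g / (x * (x - 1)))
          + ((Q.card : ℝ) - (Sq.card : ℝ)) * (g / x ^ 2)
          = (((Sq.card : ℝ) - 1) * x + ((Q.card : ℝ) - (Sq.card : ℝ)) * (x - 1)) * g
            / (x ^ 2 * (x - 1)) := by
        field_simp
      have hid2 : g / x = (x * (x - 1)) * g / (x ^ 2 * (x - 1)) := by
        field_simp
      rw [hid, hid2]
      rw [div_le_div_iff_of_pos_right (show (0:ℝ) < x ^ 2 * (x - 1) by nlinarith)]
      exact mul_le_mul_of_nonneg_right key hg0.le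
    calc (∑ q' ∈ Q, (((Gd N s).filter (fun P => EVq f q P ∧ EVq f q' P)).card : ℝ))
        = (((Gd N s).filter (fun P => EVq f q P ∧ EVq f q P)).card : ℝ)
          + (∑ q' ∈ Sq.erase q, (((Gd N s).filter (fun P => EVq f q P ∧ EVq f q' P)).card : ℝ))
          + (∑ q' ∈ Q.filter (fun q' => ¬ samep f q q'),
              (((Gd N s).filter (fun P => EVq f q P ∧ EVq f q' P)).card : ℝ)) := by
          rw [hsplit, hSsplit]
      _ ≤ g / x + ((Sq.card : ℝ) - 1) * (g / (x * (x - 1)))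
          + ((Q.card : ℝ) - (Sq.card : ℝ)) * (g / x ^ 2) := by
          have hb2' : (∑ q' ∈ Sq.erase q,
              (((Gd N s).filter (fun P => EVq f q P ∧ EVq f q' P)).card : ℝ))
              ≤ ((Sq.card : ℝ) - 1) * (g / (x * (x - 1))) := by
            rw [← he1]
            simpa [nsmul_eq_mul] using b2
          have hb3' : (∑ q' ∈ Q.filter (fun q' => ¬ samep f q q'),
              (((Gd N s).filter (fun P => EVq f q P ∧ EVq f q' P)).card : ℝ))
              ≤ ((Q.card : ℝ) - (Sq.card : ℝ)) * (g / x ^ 2) := by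
            rw [← he2]
            simpa [nsmul_eq_mul] using b3
          linarith
      _ ≤ g / x + g / x := by linarith
      _ = 2 * (g / x) := by ring
  -- put everything together
  have htot : (∑ q ∈ Q, ∑ q' ∈ Q,
      (((Gd N s).filter (fun P => EVq f q P ∧ EVq f q' P)).card : ℝ))
      ≤ (Q.card : ℝ) * (2 * (g / x)) := by
    calc (∑ q ∈ Q, ∑ q' ∈ Q,
        (((Gd N s).filter (fun P => EVq f q P ∧ EVq f q' P)).card : ℝ))
        ≤ ∑ _q ∈ Q, 2 * (g / x) := Finset.sum_le_sum hper
      _ = (Q.card : ℝ) * (2 * (g / x)) := by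
          rw [Finset.sum_const, nsmul_eq_mul]
  rw [div_le_div_iff₀ hg0 hx0]
  have s1 : (∑ q ∈ Q, ∑ q' ∈ Q,
      (((Gd N s).filter (fun P => EVq f q P ∧ EVq f q' P)).card : ℝ)) * x
      ≤ ((Q.card : ℝ) * (2 * (g / x))) * x := mul_le_mul_of_nonneg_right htot hx0.le
  have s2 : ((Q.card : ℝ) * (2 * (g / x))) * x = 2 * (Q.card : ℝ) * g := by
    field_simp
  have s3 : 2 * (Q.card : ℝ) * g ≤ (M : ℝ) ^ 2 * g := mul_le_mul_of_nonneg_right h2Tr hg0.le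
  linarith
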